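/- arXiv:1503.06093 — 4 statements merged into one kernel-verified Lean document; each statement's English description precedes it below -/
import Mathlib

section
/- For every real number r > 1 there exists a smooth map f : ℝ² → ℝ² such that M = graph f is an entire spacelike stationary graph in ℝ₁⁴ with inf_{ℝ²} W = r^{-1}, sup_{ℝ²} W = r, and such that for every t ∈ [r^{-1}, r] the level set {x ∈ ℝ² : W(x) = t} is an infinite set. -/
open Matrix MeasureTheory Filter

noncomputable section

/-- Partial derivative `∂F/∂x_i` of a function on `ℝ²`. -/
def pd (F : (Fin 2 → ℝ) → ℝ) (i : Fin 2) (x : Fin 2 → ℝ) : ℝ :=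
  fderiv ℝ F x (Pi.single i 1)

/-- Induced metric matrix of `graph f ⊂ ℝ₁^{2+m}`:
`g_{ij} = δ_{ij} + Σ_{α<m-1} ∂f_α/∂x_i ∂f_α/∂x_j − ∂f_{m}/∂x_i ∂f_{m}/∂x_j`
(the last coordinate is the timelike one). -/
def gMat {m : ℕ} (f : (Fin 2 → ℝ) → (Fin m → ℝ)) (x : Fin 2 → ℝ) :
    Matrix (Fin 2) (Fin 2) ℝ :=
  Matrix.of fun i j => (if i = j then (1:ℝ) else 0)
    + ∑ α : Fin m, (if (α : ℕ) = m - 1 then (-1:ℝ) else 1)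
        * pd (fun y => f y α) i x * pd (fun y => f y α) j x

/-- The W-function `W = √(det g)`. -/
def Wf {m : ℕ} (f : (Fin 2 → ℝ) → (Fin m → ℝ)) (x : Fin 2 → ℝ) : ℝ :=
  Real.sqrt ((gMat f x).det)

/-- The graph of `f` is an entire spacelike graph: `g` is positive definite everywhere. -/
def Spacelike {m : ℕ} (f : (Fin 2 → ℝ) → (Fin m → ℝ)) : Prop :=
  ∀ x, (gMat f x).PosDef

/-- The graph of `f` is stationary (vanishing mean curvature):
`Σ_i ∂_i(W g^{ij}) = 0` and `Σ_{i,j} ∂_i(W g^{ij} ∂f_α/∂x_j) = 0`. -/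
def Stationary {m : ℕ} (f : (Fin 2 → ℝ) → (Fin m → ℝ)) : Prop :=
  (∀ x, ∀ j : Fin 2,
     ∑ i : Fin 2, pd (fun y => Wf f y * (gMat f y)⁻¹ i j) i x = 0) ∧
  (∀ x, ∀ α : Fin m,
     ∑ i : Fin 2, pd (fun y => ∑ j : Fin 2,
        Wf f y * (gMat f y)⁻¹ i j * pd (fun z => f z α) j y) i x = 0)

/-- `f` is affine linear. -/
def AffineLinear {m : ℕ} (f : (Fin 2 → ℝ) → (Fin m → ℝ)) : Prop :=
  ∃ (L : (Fin 2 → ℝ) →ₗ[ℝ] (Fin m → ℝ)) (c : Fin m → ℝ), ∀ x, f x = L x + c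

/-- A real-valued function on `ℝ²` is affine linear. -/
def AffineLinR (h : (Fin 2 → ℝ) → ℝ) : Prop :=
  ∃ (L : (Fin 2 → ℝ) →ₗ[ℝ] ℝ) (c : ℝ), ∀ x, h x = L x + c

/-- `h : ℝ² → ℝ` is harmonic: smooth with `∂²h/∂x₁² + ∂²h/∂x₂² = 0`. -/
def HarmonicR (h : (Fin 2 → ℝ) → ℝ) : Prop :=
  ContDiff ℝ (⊤ : ℕ∞) h ∧
  ∀ x, pd (fun y => pd h 0 y) 0 x + pd (fun y => pd h 1 y) 1 x = 0

/-- `y` is a lightlike vector of `ℝ₁^m`: `y₁² + ⋯ + y_{m-1}² − y_m² = 0`. -/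
def Lightlike {m : ℕ} (y : Fin m → ℝ) : Prop :=
  ∑ α : Fin m, (if (α : ℕ) = m - 1 then (-1:ℝ) else 1) * y α * y α = 0

/-- `f = h·y₀ + y₁` with `h` a nonlinear harmonic function, `y₀` a nonzero lightlike
vector and `y₁` a constant vector. -/
def LightlikeForm {m : ℕ} (f : (Fin 2 → ℝ) → (Fin m → ℝ)) : Prop :=
  ∃ (h : (Fin 2 → ℝ) → ℝ) (y₀ y₁ : Fin m → ℝ),
    HarmonicR h ∧ ¬ AffineLinR h ∧ Lightlike y₀ ∧ y₀ ≠ 0 ∧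
    ∀ x, f x = fun α => h x * y₀ α + y₁ α

/-- The linear change of variables `x₁ = u₁, x₂ = a·u₁ + b·u₂`. -/
def Tmap (a b : ℝ) (u : Fin 2 → ℝ) : Fin 2 → ℝ := ![u 0, a * u 0 + b * u 1]

/-- Jacobian matrix of `Tmap a b`. -/
def Amat (a b : ℝ) : Matrix (Fin 2) (Fin 2) ℝ := !![1, 0; a, b]

lemma proj_hasFDerivAt (i : Fin 2) (x : Fin 2 → ℝ) :
    HasFDerivAt (fun y : Fin 2 → ℝ => y i)
      (ContinuousLinearMap.proj i : (Fin 2 → ℝ) →L[ℝ] ℝ) x :=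
  (ContinuousLinearMap.proj (R := ℝ) (φ := fun _ : Fin 2 => ℝ) i).hasFDerivAt

lemma pd_sep {φ ψ φd ψd : ℝ → ℝ}
    (hφ : ∀ t, HasDerivAt φ (φd t) t) (hψ : ∀ t, HasDerivAt ψ (ψd t) t)
    (x : Fin 2 → ℝ) :
    pd (fun y => φ (y 0) * ψ (y 1)) 0 x = φd (x 0) * ψ (x 1)
  ∧ pd (fun y => φ (y 0) * ψ (y 1)) 1 x = φ (x 0) * ψd (x 1) := by
  have h0 : HasFDerivAt (fun y : Fin 2 → ℝ => φ (y 0))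
      (φd (x 0) • (ContinuousLinearMap.proj 0 : (Fin 2 → ℝ) →L[ℝ] ℝ)) x :=
    (hφ (x 0)).comp_hasFDerivAt x (proj_hasFDerivAt 0 x)
  have h1 : HasFDerivAt (fun y : Fin 2 → ℝ => ψ (y 1))
      (ψd (x 1) • (ContinuousLinearMap.proj 1 : (Fin 2 → ℝ) →L[ℝ] ℝ)) x :=
    (hψ (x 1)).comp_hasFDerivAt x (proj_hasFDerivAt 1 x)
  have hf : fderiv ℝ (fun y : Fin 2 → ℝ => φ (y 0) * ψ (y 1)) x = _ := (h0.mul h1).fderiv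
  constructor <;>
  · simp only [pd, hf]
    simp [Pi.single_apply, Fin.ext_iff]
    try ring

lemma pd_const (a : ℝ) (i : Fin 2) (x : Fin 2 → ℝ) : pd (fun _ => a) i x = 0 := by
  simp [pd]

/-- The building blocks. -/
def S5 (k t : ℝ) : ℝ := Real.sin ((1+k)⁻¹ * t)
def C5 (k t : ℝ) : ℝ := (1+k)⁻¹ * Real.cos ((1+k)⁻¹ * t)
def A5 (k t : ℝ) : ℝ := Real.exp (-((1-k)⁻¹ * t)) - k * Real.exp ((1-k)⁻¹ * t)
def B5 (k t : ℝ) : ℝ := Real.exp (-((1-k)⁻¹ * t)) + k * Real.exp ((1-k)⁻¹ * t)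
def f5 (k : ℝ) (x : Fin 2 → ℝ) : Fin 2 → ℝ :=
  ![S5 k (x 0) * A5 k (x 1), S5 k (x 0) * B5 k (x 1)]
def Q5 (k t : ℝ) : ℝ := 1 + k^2 - 2*k*Real.cos (2*((1+k)⁻¹ * t))

lemma hasDerivAt_S5 (k t : ℝ) : HasDerivAt (S5 k) (C5 k t) t := by
  have := (Real.hasDerivAt_sin ((1+k)⁻¹ * t)).comp t
    ((hasDerivAt_id t).const_mul ((1+k)⁻¹))
  exact this.congr_deriv (by rw [C5]; ring)

lemma hasDerivAt_C5 (k t : ℝ) :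
    HasDerivAt (C5 k) (-((1+k)⁻¹ * (1+k)⁻¹ * Real.sin ((1+k)⁻¹ * t))) t := by
  have := ((Real.hasDerivAt_cos ((1+k)⁻¹ * t)).comp t
    ((hasDerivAt_id t).const_mul ((1+k)⁻¹))).const_mul ((1+k)⁻¹)
  refine this.congr_deriv ?_
  simp [Function.comp_def]; ring

lemma hasDerivAt_A5 (k t : ℝ) :
    HasDerivAt (A5 k) (-(1-k)⁻¹ * B5 k t) t := by
  have h1 := (Real.hasDerivAt_exp (-((1-k)⁻¹ * t))).comp t
    (((hasDerivAt_id t).const_mul ((1-k)⁻¹)).neg)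
  have h2 := ((Real.hasDerivAt_exp ((1-k)⁻¹ * t)).comp t
    ((hasDerivAt_id t).const_mul ((1-k)⁻¹))).const_mul k
  have := h1.sub h2
  refine this.congr_deriv ?_
  simp [B5, Function.comp_def]; ring

lemma hasDerivAt_B5 (k t : ℝ) :
    HasDerivAt (B5 k) (-(1-k)⁻¹ * A5 k t) t := by
  have h1 := (Real.hasDerivAt_exp (-((1-k)⁻¹ * t))).comp t
    (((hasDerivAt_id t).const_mul ((1-k)⁻¹)).neg)
  have h2 := ((Real.hasDerivAt_exp ((1-k)⁻¹ * t)).comp t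
    ((hasDerivAt_id t).const_mul ((1-k)⁻¹))).const_mul k
  have := h1.add h2
  refine this.congr_deriv ?_
  simp [A5, Function.comp_def]; ring

lemma f5_0 (k : ℝ) : (fun y => f5 k y 0) = fun y => S5 k (y 0) * A5 k (y 1) := rfl
lemma f5_1 (k : ℝ) : (fun y => f5 k y 1) = fun y => S5 k (y 0) * B5 k (y 1) := rfl

lemma pd_f5_00 (k : ℝ) (x : Fin 2 → ℝ) :
    pd (fun y => f5 k y 0) 0 x = C5 k (x 0) * A5 k (x 1) := by
  rw [f5_0]; exact (pd_sep (hasDerivAt_S5 k) (hasDerivAt_A5 k) x).1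
lemma pd_f5_01 (k : ℝ) (x : Fin 2 → ℝ) :
    pd (fun y => f5 k y 0) 1 x = S5 k (x 0) * (-(1-k)⁻¹ * B5 k (x 1)) := by
  rw [f5_0]; exact (pd_sep (hasDerivAt_S5 k) (hasDerivAt_A5 k) x).2
lemma pd_f5_10 (k : ℝ) (x : Fin 2 → ℝ) :
    pd (fun y => f5 k y 1) 0 x = C5 k (x 0) * B5 k (x 1) := by
  rw [f5_1]; exact (pd_sep (hasDerivAt_S5 k) (hasDerivAt_B5 k) x).1
lemma pd_f5_11 (k : ℝ) (x : Fin 2 → ℝ) :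
    pd (fun y => f5 k y 1) 1 x = S5 k (x 0) * (-(1-k)⁻¹ * A5 k (x 1)) := by
  rw [f5_1]; exact (pd_sep (hasDerivAt_S5 k) (hasDerivAt_B5 k) x).2

lemma gMat_f5 {k : ℝ} (hk0 : 0 < k) (hk1 : k < 1) (x : Fin 2 → ℝ) :
    gMat (f5 k) x =
      !![Q5 k (x 0) * ((1+k)⁻¹)^2, 0; 0, Q5 k (x 0) * ((1-k)⁻¹)^2] := by
  have hp : (1+k) ≠ 0 := by linarith
  have hm : (1-k) ≠ 0 := by linarith
  have e00 : gMat (f5 k) x 0 0 = Q5 k (x 0) * ((1+k)⁻¹)^2 := by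
    simp only [gMat, Matrix.of_apply, Fin.sum_univ_two, pd_f5_00, pd_f5_10]
    norm_num
    simp only [Q5, S5, C5, A5, B5, Real.cos_two_mul]
    set co := Real.cos ((1+k)⁻¹ * x 0) with hco
    set Ea := Real.exp (-((1-k)⁻¹ * x 1)) with hEa
    set Eb := Real.exp ((1-k)⁻¹ * x 1) with hEb
    have hEE : Ea * Eb = 1 := by rw [hEa, hEb, ← Real.exp_add]; simp
    field_simp
    linear_combination (-(4*k*co^2)) * hEE
  have e01 : gMat (f5 k) x 0 1 = 0 := by
    simp only [gMat, Matrix.of_apply, Fin.sum_univ_two, pd_f5_00, pd_f5_01, pd_f5_10, pd_f5_11]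
    norm_num; ring
  have e10 : gMat (f5 k) x 1 0 = 0 := by
    simp only [gMat, Matrix.of_apply, Fin.sum_univ_two, pd_f5_00, pd_f5_01, pd_f5_10, pd_f5_11]
    norm_num; ring
  have e11 : gMat (f5 k) x 1 1 = Q5 k (x 0) * ((1-k)⁻¹)^2 := by
    simp only [gMat, Matrix.of_apply, Fin.sum_univ_two, pd_f5_01, pd_f5_11]
    norm_num
    simp only [Q5, S5, C5, A5, B5, Real.cos_two_mul]
    set co := Real.cos ((1+k)⁻¹ * x 0) with hco
    set s := Real.sin ((1+k)⁻¹ * x 0) with hs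
    set Ea := Real.exp (-((1-k)⁻¹ * x 1)) with hEa
    set Eb := Real.exp ((1-k)⁻¹ * x 1) with hEb
    have hEE : Ea * Eb = 1 := by rw [hEa, hEb, ← Real.exp_add]; simp
    have hpyth : s^2 + co^2 = 1 := by rw [hs, hco]; exact Real.sin_sq_add_cos_sq _
    field_simp
    linear_combination (4*k*s^2) * hEE + (4*k) * hpyth
  rw [Matrix.eta_fin_two (gMat (f5 k) x), e00, e01, e10, e11]

lemma Q5_lb {k : ℝ} (hk0 : 0 < k) (t : ℝ) : (1-k)^2 ≤ Q5 k t := by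
  simp only [Q5]
  nlinarith [Real.cos_le_one (2*((1+k)⁻¹ * t))]

lemma Q5_ub {k : ℝ} (hk0 : 0 < k) (t : ℝ) : Q5 k t ≤ (1+k)^2 := by
  simp only [Q5]
  nlinarith [Real.neg_one_le_cos (2*((1+k)⁻¹ * t))]

lemma Q5_pos {k : ℝ} (hk0 : 0 < k) (hk1 : k < 1) (t : ℝ) : 0 < Q5 k t :=
  lt_of_lt_of_le (by nlinarith) (Q5_lb hk0 t)

lemma det_f5 {k : ℝ} (hk0 : 0 < k) (hk1 : k < 1) (x : Fin 2 → ℝ) :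
    (gMat (f5 k) x).det = (Q5 k (x 0) * ((1+k)⁻¹ * (1-k)⁻¹))^2 := by
  rw [gMat_f5 hk0 hk1, Matrix.det_fin_two_of]; ring

lemma Wf_f5 {k : ℝ} (hk0 : 0 < k) (hk1 : k < 1) (x : Fin 2 → ℝ) :
    Wf (f5 k) x = Q5 k (x 0) * ((1+k)⁻¹ * (1-k)⁻¹) := by
  have h1 : (0:ℝ) < (1+k)⁻¹ := by positivity
  have h2 : (0:ℝ) < (1-k)⁻¹ := by rw [inv_pos]; linarith
  have hQ : 0 ≤ Q5 k (x 0) * ((1+k)⁻¹ * (1-k)⁻¹) :=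
    mul_nonneg (Q5_pos hk0 hk1 _).le (mul_pos h1 h2).le
  rw [Wf, det_f5 hk0 hk1, Real.sqrt_sq hQ]

lemma Wg00 {k : ℝ} (hk0 : 0 < k) (hk1 : k < 1) (y : Fin 2 → ℝ) :
    Wf (f5 k) y * (gMat (f5 k) y)⁻¹ 0 0 = (1+k)/(1-k) := by
  have hp : (1+k) ≠ 0 := by linarith
  have hm : (1-k) ≠ 0 := by linarith
  have hQ : Q5 k (y 0) ≠ 0 := (Q5_pos hk0 hk1 _).ne'
  rw [Wf_f5 hk0 hk1, Matrix.inv_def, Matrix.adjugate_fin_two, Matrix.det_fin_two,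
    Ring.inverse_eq_inv', gMat_f5 hk0 hk1]
  simp [Matrix.smul_apply]
  field_simp

lemma Wg11 {k : ℝ} (hk0 : 0 < k) (hk1 : k < 1) (y : Fin 2 → ℝ) :
    Wf (f5 k) y * (gMat (f5 k) y)⁻¹ 1 1 = (1-k)/(1+k) := by
  have hp : (1+k) ≠ 0 := by linarith
  have hm : (1-k) ≠ 0 := by linarith
  have hQ : Q5 k (y 0) ≠ 0 := (Q5_pos hk0 hk1 _).ne'
  rw [Wf_f5 hk0 hk1, Matrix.inv_def, Matrix.adjugate_fin_two, Matrix.det_fin_two,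
    Ring.inverse_eq_inv', gMat_f5 hk0 hk1]
  simp [Matrix.smul_apply]
  field_simp

lemma Wg01 {k : ℝ} (hk0 : 0 < k) (hk1 : k < 1) (y : Fin 2 → ℝ) :
    Wf (f5 k) y * (gMat (f5 k) y)⁻¹ 0 1 = 0 := by
  rw [Matrix.inv_def, Matrix.adjugate_fin_two, Ring.inverse_eq_inv', gMat_f5 hk0 hk1]
  simp [Matrix.smul_apply]

lemma Wg10 {k : ℝ} (hk0 : 0 < k) (hk1 : k < 1) (y : Fin 2 → ℝ) :
    Wf (f5 k) y * (gMat (f5 k) y)⁻¹ 1 0 = 0 := by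
  rw [Matrix.inv_def, Matrix.adjugate_fin_two, Ring.inverse_eq_inv', gMat_f5 hk0 hk1]
  simp [Matrix.smul_apply]

lemma posdef_diag {a b : ℝ} (ha : 0 < a) (hb : 0 < b) : (!![a,0;0,b]).PosDef := by
  rw [Matrix.posDef_iff_dotProduct_mulVec]
  constructor
  · ext i j; fin_cases i <;> fin_cases j <;> simp [Matrix.IsHermitian]
  · intro v hv
    have h : star v ⬝ᵥ (!![a,0;0,b]).mulVec v = a * (v 0)^2 + b * (v 1)^2 := by
      simp [Matrix.mulVec, dotProduct, Fin.sum_univ_two]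
      ring
    rw [h]
    rcases Function.ne_iff.mp hv with ⟨i, hi⟩
    have hi' : v i ≠ 0 := hi
    fin_cases i <;> simp at hi' <;>
      nlinarith [sq_nonneg (v 0), sq_nonneg (v 1), sq_pos_of_ne_zero hi',
        mul_nonneg ha.le (sq_nonneg (v 0)), mul_nonneg hb.le (sq_nonneg (v 1))]

lemma spacelike_f5 {k : ℝ} (hk0 : 0 < k) (hk1 : k < 1) : Spacelike (f5 k) := by
  intro x
  rw [gMat_f5 hk0 hk1]
  have h1 : (0:ℝ) < (1+k)⁻¹ := by positivity
  have h2 : (0:ℝ) < (1-k)⁻¹ := by rw [inv_pos]; linarith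
  exact posdef_diag (mul_pos (Q5_pos hk0 hk1 _) (pow_pos h1 2)) (mul_pos (Q5_pos hk0 hk1 _) (pow_pos h2 2))

lemma stationary_f5 {k : ℝ} (hk0 : 0 < k) (hk1 : k < 1) : Stationary (f5 k) := by
  have hp : (1+k) ≠ 0 := by linarith
  have hm : (1-k) ≠ 0 := by linarith
  have h00 : (fun y => Wf (f5 k) y * (gMat (f5 k) y)⁻¹ 0 0) = fun _ => (1+k)/(1-k) :=
    funext fun y => Wg00 hk0 hk1 y
  have h01 : (fun y => Wf (f5 k) y * (gMat (f5 k) y)⁻¹ 0 1) = fun _ => (0:ℝ) :=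
    funext fun y => Wg01 hk0 hk1 y
  have h10 : (fun y => Wf (f5 k) y * (gMat (f5 k) y)⁻¹ 1 0) = fun _ => (0:ℝ) :=
    funext fun y => Wg10 hk0 hk1 y
  have h11 : (fun y => Wf (f5 k) y * (gMat (f5 k) y)⁻¹ 1 1) = fun _ => (1-k)/(1+k) :=
    funext fun y => Wg11 hk0 hk1 y
  constructor
  · intro x j
    refine Fin.cases ?_ (fun j' => Fin.cases ?_ (fun j'' => j''.elim0) j') j
    · rw [Fin.sum_univ_two, h00, h10, pd_const, pd_const]; norm_num
    · simp only [show (Fin.succ 0 : Fin 2) = 1 from rfl]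
      rw [Fin.sum_univ_two, h01, h11, pd_const, pd_const]; norm_num
  · intro x α
    refine Fin.cases ?_ (fun a' => Fin.cases ?_ (fun a'' => a''.elim0) a') α
    · -- α = 0
      have g0 : (fun y => ∑ j : Fin 2,
            Wf (f5 k) y * (gMat (f5 k) y)⁻¹ 0 j * pd (fun z => f5 k z 0) j y)
          = fun y => ((1+k)/(1-k) * C5 k (y 0)) * A5 k (y 1) := by
        funext y
        rw [Fin.sum_univ_two, Wg00 hk0 hk1 y, Wg01 hk0 hk1 y, pd_f5_00, pd_f5_01]
        ring
      have g1 : (fun y => ∑ j : Fin 2,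
            Wf (f5 k) y * (gMat (f5 k) y)⁻¹ 1 j * pd (fun z => f5 k z 0) j y)
          = fun y => S5 k (y 0) * ((1-k)/(1+k) * (-(1-k)⁻¹ * B5 k (y 1))) := by
        funext y
        rw [Fin.sum_univ_two, Wg10 hk0 hk1 y, Wg11 hk0 hk1 y, pd_f5_00, pd_f5_01]
        ring
      rw [Fin.sum_univ_two, g0, g1]
      have d0 := (pd_sep (fun t => (hasDerivAt_C5 k t).const_mul ((1+k)/(1-k)))
        (hasDerivAt_A5 k) x).1
      have d1 := (pd_sep (hasDerivAt_S5 k)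
        (fun t => ((hasDerivAt_B5 k t).const_mul (-(1-k)⁻¹)).const_mul ((1-k)/(1+k))) x).2
      rw [d0, d1]
      simp only [S5]
      field_simp
      ring
    · -- α = 1
      simp only [show (Fin.succ 0 : Fin 2) = 1 from rfl]
      have g0 : (fun y => ∑ j : Fin 2,
            Wf (f5 k) y * (gMat (f5 k) y)⁻¹ 0 j * pd (fun z => f5 k z 1) j y)
          = fun y => ((1+k)/(1-k) * C5 k (y 0)) * B5 k (y 1) := by
        funext y
        rw [Fin.sum_univ_two, Wg00 hk0 hk1 y, Wg01 hk0 hk1 y, pd_f5_10, pd_f5_11]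
        ring
      have g1 : (fun y => ∑ j : Fin 2,
            Wf (f5 k) y * (gMat (f5 k) y)⁻¹ 1 j * pd (fun z => f5 k z 1) j y)
          = fun y => S5 k (y 0) * ((1-k)/(1+k) * (-(1-k)⁻¹ * A5 k (y 1))) := by
        funext y
        rw [Fin.sum_univ_two, Wg10 hk0 hk1 y, Wg11 hk0 hk1 y, pd_f5_10, pd_f5_11]
        ring
      rw [Fin.sum_univ_two, g0, g1]
      have d0 := (pd_sep (fun t => (hasDerivAt_C5 k t).const_mul ((1+k)/(1-k)))
        (hasDerivAt_B5 k) x).1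
      have d1 := (pd_sep (hasDerivAt_S5 k)
        (fun t => ((hasDerivAt_A5 k t).const_mul (-(1-k)⁻¹)).const_mul ((1-k)/(1+k))) x).2
      rw [d0, d1]
      simp only [S5]
      field_simp
      ring

lemma contDiff_proj (i : Fin 2) : ContDiff ℝ (⊤ : ℕ∞) (fun x : Fin 2 → ℝ => x i) :=
  (ContinuousLinearMap.proj (R := ℝ) (φ := fun _ : Fin 2 => ℝ) i).contDiff

lemma contDiff_aux1 (k : ℝ) :
    ContDiff ℝ (⊤ : ℕ∞) fun x : Fin 2 → ℝ => S5 k (x 0) * A5 k (x 1) := by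
  simp only [S5, A5]
  exact (Real.contDiff_sin.comp (contDiff_const.mul (contDiff_proj 0))).mul
    ((Real.contDiff_exp.comp ((contDiff_const.mul (contDiff_proj 1)).neg)).sub
      (contDiff_const.mul (Real.contDiff_exp.comp (contDiff_const.mul (contDiff_proj 1)))))

lemma contDiff_aux2 (k : ℝ) :
    ContDiff ℝ (⊤ : ℕ∞) fun x : Fin 2 → ℝ => S5 k (x 0) * B5 k (x 1) := by
  simp only [S5, B5]
  exact (Real.contDiff_sin.comp (contDiff_const.mul (contDiff_proj 0))).mul
    ((Real.contDiff_exp.comp ((contDiff_const.mul (contDiff_proj 1)).neg)).add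
      (contDiff_const.mul (Real.contDiff_exp.comp (contDiff_const.mul (contDiff_proj 1)))))

lemma contDiff_f5 (k : ℝ) : ContDiff ℝ (⊤ : ℕ∞) (f5 k) := by
  rw [contDiff_pi]
  intro i
  fin_cases i
  all_goals {
    first
    | (show ContDiff ℝ (⊤ : ℕ∞) fun x : Fin 2 → ℝ => S5 k (x 0) * A5 k (x 1)
       exact contDiff_aux1 k)
    | (show ContDiff ℝ (⊤ : ℕ∞) fun x : Fin 2 → ℝ => S5 k (x 0) * B5 k (x 1)
       exact contDiff_aux2 k) }

lemma Wf_lb {k : ℝ} (hk0 : 0 < k) (hk1 : k < 1) (x : Fin 2 → ℝ) :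
    (1-k)/(1+k) ≤ Wf (f5 k) x := by
  have hp : (0:ℝ) < 1+k := by linarith
  have hm' : (0:ℝ) < 1-k := by linarith
  rw [Wf_f5 hk0 hk1]
  have he : (1-k)/(1+k) = (1-k)^2 * ((1+k)⁻¹*(1-k)⁻¹) := by field_simp
  rw [he]
  exact mul_le_mul_of_nonneg_right (Q5_lb hk0 _) (by positivity)

lemma Wf_ub {k : ℝ} (hk0 : 0 < k) (hk1 : k < 1) (x : Fin 2 → ℝ) :
    Wf (f5 k) x ≤ (1+k)/(1-k) := by
  have hp : (0:ℝ) < 1+k := by linarith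
  have hm' : (0:ℝ) < 1-k := by linarith
  rw [Wf_f5 hk0 hk1]
  have he : (1+k)/(1-k) = (1+k)^2 * ((1+k)⁻¹*(1-k)⁻¹) := by field_simp
  rw [he]
  exact mul_le_mul_of_nonneg_right (Q5_ub hk0 _) (by positivity)

lemma iInf_Wf {k : ℝ} (hk0 : 0 < k) (hk1 : k < 1) :
    (⨅ x, Wf (f5 k) x) = (1-k)/(1+k) := by
  have hp : (0:ℝ) < 1+k := by linarith
  have hm' : (0:ℝ) < 1-k := by linarith
  apply le_antisymm
  · have hW0 : Wf (f5 k) 0 = (1-k)/(1+k) := by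
      rw [Wf_f5 hk0 hk1]
      simp only [Q5, Pi.zero_apply, mul_zero, Real.cos_zero]
      field_simp
      ring
    calc (⨅ x, Wf (f5 k) x) ≤ Wf (f5 k) 0 :=
          ciInf_le ⟨(1-k)/(1+k), by rintro _ ⟨x, rfl⟩; exact Wf_lb hk0 hk1 x⟩ 0
      _ = _ := hW0
  · exact le_ciInf (Wf_lb hk0 hk1)

lemma iSup_Wf {k : ℝ} (hk0 : 0 < k) (hk1 : k < 1) :
    (⨆ x, Wf (f5 k) x) = (1+k)/(1-k) := by
  have hp : (0:ℝ) < 1+k := by linarith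
  have hm' : (0:ℝ) < 1-k := by linarith
  apply le_antisymm
  · exact ciSup_le (Wf_ub hk0 hk1)
  · have hW0 : Wf (f5 k) (fun _ => (1+k)*Real.pi/2) = (1+k)/(1-k) := by
      rw [Wf_f5 hk0 hk1]
      have harg : 2*((1+k)⁻¹ * ((1+k)*Real.pi/2)) = Real.pi := by
        field_simp
      simp only [Q5, harg, Real.cos_pi]
      field_simp
      ring
    calc (1+k)/(1-k) = Wf (f5 k) (fun _ => (1+k)*Real.pi/2) := hW0.symm
      _ ≤ (⨆ x, Wf (f5 k) x) :=
          le_ciSup ⟨(1+k)/(1-k), by rintro _ ⟨x, rfl⟩; exact Wf_ub hk0 hk1 x⟩ _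

lemma level_Wf {k : ℝ} (hk0 : 0 < k) (hk1 : k < 1) (t : ℝ)
    (ht : t ∈ Set.Icc ((1-k)/(1+k)) ((1+k)/(1-k))) :
    {x : Fin 2 → ℝ | Wf (f5 k) x = t}.Infinite := by
  have hp : (0:ℝ) < 1+k := by linarith
  have hm' : (0:ℝ) < 1-k := by linarith
  obtain ⟨ht1, ht2⟩ := ht
  have h1' : 1-k ≤ t*(1+k) := by
    have := (div_le_iff₀ hp).mp ht1; linarith
  have h2' : t*(1-k) ≤ 1+k := by
    have := (le_div_iff₀ hm').mp ht2; linarith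
  set val := (1 + k^2 - t*((1+k)*(1-k)))/(2*k) with hval
  have hv1 : -1 ≤ val := by
    rw [hval, le_div_iff₀ (by linarith : (0:ℝ) < 2*k)]
    nlinarith [mul_le_mul_of_nonneg_left h2' hp.le]
  have hv2 : val ≤ 1 := by
    rw [hval, div_le_iff₀ (by linarith : (0:ℝ) < 2*k)]
    nlinarith [mul_le_mul_of_nonneg_left h1' hm'.le]
  obtain ⟨θ, -, hθ⟩ := Real.surjOn_cos ⟨hv1, hv2⟩
  apply Set.infinite_of_injective_forall_mem
    (f := fun s : ℝ => (![(1+k)*θ/2, s] : Fin 2 → ℝ))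
  · intro a b hab
    have := congrFun hab 1
    simpa using this
  · intro s
    show Wf (f5 k) ![(1+k)*θ/2, s] = t
    rw [Wf_f5 hk0 hk1]
    have h0 : (![(1+k)*θ/2, s] : Fin 2 → ℝ) 0 = (1+k)*θ/2 := rfl
    rw [h0]
    have harg : 2*((1+k)⁻¹ * ((1+k)*θ/2)) = θ := by field_simp
    simp only [Q5, harg, hθ, hval]
    field_simp
    ring


/-- for every `r > 1` there is an entire spacelike stationary graph in
`ℝ₁⁴` with `inf W = r⁻¹`, `sup W = r`, taking every value of `[r⁻¹, r]` infinitely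
often. -/
theorem stmt5 (r : ℝ) (hr : 1 < r) :
    ∃ f : (Fin 2 → ℝ) → (Fin 2 → ℝ),
      ContDiff ℝ (⊤ : ℕ∞) f ∧ Spacelike f ∧ Stationary f ∧
      (⨅ x, Wf f x) = r⁻¹ ∧ (⨆ x, Wf f x) = r ∧
      ∀ t ∈ Set.Icc r⁻¹ r, {x : Fin 2 → ℝ | Wf f x = t}.Infinite := by
  have hr0 : (0:ℝ) < r := by linarith
  have hrp : (0:ℝ) < r+1 := by linarith
  set k := (r-1)/(r+1) with hk
  have hk0 : 0 < k := div_pos (by linarith) hrp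
  have hk1 : k < 1 := by rw [hk, div_lt_one hrp]; linarith
  have h1k : 1 - k = 2/(r+1) := by rw [hk]; field_simp; norm_num
  have h2k : 1 + k = 2*r/(r+1) := by rw [hk]; field_simp; ring
  have e1 : (1-k)/(1+k) = r⁻¹ := by rw [h1k, h2k]; field_simp
  have e2 : (1+k)/(1-k) = r := by rw [h1k, h2k]; field_simp
  refine ⟨f5 k, contDiff_f5 k, spacelike_f5 hk0 hk1, stationary_f5 hk0 hk1, ?_, ?_, ?_⟩
  · rw [iInf_Wf hk0 hk1, e1]
  · rw [iSup_Wf hk0 hk1, e2]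
  · intro t ht
    refine level_Wf hk0 hk1 t ?_
    rwa [e1, e2]
end
end

section
/- Let h₁, h₂ : ℂ → ℂ be entire (holomorphic on all of ℂ) functions satisfying h₁(z)² − h₂(z)² = 1 for all z ∈ ℂ. Then there exists an entire function β : ℂ → ℂ such that h₁(z) = cosh(β(z)) and h₂(z) = sinh(β(z)) for all z ∈ ℂ. -/
open Complex

/-- Every entire function has an entire primitive. -/
lemma entire_exists_primitive (g : ℂ → ℂ) (hg : Differentiable ℂ g) :
    ∃ F : ℂ → ℂ, ∀ z : ℂ, HasDerivAt F (g z) z := by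
  set p : ℕ → ℂ := fun n => ((Nat.factorial n : ℂ))⁻¹ * iteratedDeriv n g 0 with hp
  have hS : ∀ z : ℂ, HasSum (fun n : ℕ => p n * z ^ n) (g z) := by
    intro z
    have := Complex.hasSum_taylorSeries_of_entire hg 0 z
    simpa [hp, smul_eq_mul, mul_comm, mul_left_comm, mul_assoc] using this
  refine ⟨fun z => ∑' n : ℕ, (p n / (n + 1)) * z ^ (n + 1), fun z => ?_⟩
  set R : ℝ := ‖z‖ + 1 with hR
  have hR0 : (0 : ℝ) < R := by positivity
  have hu : Summable (fun n : ℕ => ‖p n‖ * R ^ n) := by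
    have := (hS (R : ℂ)).summable
    have h2 : Summable (fun n : ℕ => ‖p n * (R : ℂ) ^ n‖) :=
      (summable_norm_iff).2 this
    refine h2.congr fun n => ?_
    simp [norm_mul, norm_pow, Complex.norm_real, abs_of_pos hR0]
  have key :
      HasDerivAt (fun y : ℂ => ∑' n : ℕ, (p n / (n + 1)) * y ^ (n + 1))
        (∑' n : ℕ, p n * z ^ n) z := by
    refine hasDerivAt_tsum_of_isPreconnected hu (Metric.isOpen_ball)
      (Convex.isPreconnected (convex_ball (0 : ℂ) R))
      (g := fun n y => (p n / (n + 1)) * y ^ (n + 1))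
      (g' := fun n y => p n * y ^ n)
      (y₀ := 0) ?_ ?_ ?_ ?_ ?_
    · intro n y hy
      have h1 : HasDerivAt (fun y : ℂ => y ^ (n + 1))
          ((n + 1 : ℕ) * y ^ n) y := by
        simpa using hasDerivAt_pow (n + 1) y
      have hn : ((n : ℂ) + 1) ≠ 0 := Nat.cast_add_one_ne_zero n
      convert h1.const_mul (p n / (n + 1)) using 1
      case e'_4 => rfl
      push_cast
      field_simp
    · intro n y hy
      rw [Metric.mem_ball, dist_zero_right] at hy
      calc ‖p n * y ^ n‖ = ‖p n‖ * ‖y‖ ^ n := by simp [norm_mul, norm_pow]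
        _ ≤ ‖p n‖ * R ^ n := by
            have : ‖y‖ ^ n ≤ R ^ n := pow_le_pow_left₀ (norm_nonneg y) hy.le n
            exact mul_le_mul_of_nonneg_left this (norm_nonneg _)
    · simpa [Metric.mem_ball] using hR0
    · refine Summable.congr summable_zero fun n => ?_
      simp
    · simp [Metric.mem_ball, hR]
  have := (hS z).tsum_eq
  rw [this] at key
  exact key

/-- A nonvanishing entire function has an entire logarithm. -/
lemma entire_exists_exp_eq (f : ℂ → ℂ) (hf : Differentiable ℂ f)
    (h0 : ∀ z : ℂ, f z ≠ 0) :
    ∃ β : ℂ → ℂ, Differentiable ℂ β ∧ ∀ z : ℂ, Complex.exp (β z) = f z := by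
  have hderiv : Differentiable ℂ (deriv f) := fun z =>
    ((analyticOnNhd_univ_iff_differentiable.mpr hf).deriv z trivial).differentiableAt
  set g : ℂ → ℂ := fun z => deriv f z / f z with hg
  have hgd : Differentiable ℂ g := hderiv.div hf h0
  obtain ⟨F, hF⟩ := entire_exists_primitive g hgd
  have hFd : Differentiable ℂ F := fun z => (hF z).differentiableAt
  set φ : ℂ → ℂ := fun z => f z * Complex.exp (-F z) with hφ
  have hφd : ∀ z : ℂ, HasDerivAt φ 0 z := by
    intro z
    have h1 : HasDerivAt (fun w => Complex.exp (-F w)) 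
        (Complex.exp (-F z) * (-g z)) z := by
      have := ((hF z).neg).cexp
      simpa using this
    have h2 := ((hf z).hasDerivAt).mul h1
    convert h2 using 1
    case e'_4 => rfl
    case e'_5 => rfl
    case e'_8 => rfl
    have hfz := h0 z
    rw [hg]
    simp only
    field_simp
    ring
  have hconst : ∀ z : ℂ, φ z = φ 0 := by
    intro z
    exact is_const_of_deriv_eq_zero (fun w => (hφd w).differentiableAt)
      (fun w => (hφd w).deriv) z 0
  have hφ0 : φ 0 ≠ 0 := mul_ne_zero (h0 0) (Complex.exp_ne_zero _)
  refine ⟨fun z => F z + Complex.log (φ 0), hFd.add_const _, fun z => ?_⟩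
  rw [Complex.exp_add, Complex.exp_log hφ0, ← hconst z]
  show Complex.exp (F z) * (f z * Complex.exp (-F z)) = f z
  rw [← mul_assoc, mul_comm (Complex.exp (F z)), mul_assoc, ← Complex.exp_add]
  simp

/-- if `h₁, h₂` are entire with `h₁² − h₂² ≡ 1` then `h₁ = cosh β`,
`h₂ = sinh β` for some entire function `β`. -/
theorem stmt13 (h₁ h₂ : ℂ → ℂ)
    (hh₁ : Differentiable ℂ h₁) (hh₂ : Differentiable ℂ h₂)
    (heq : ∀ z : ℂ, h₁ z ^ 2 - h₂ z ^ 2 = 1) :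
    ∃ β : ℂ → ℂ, Differentiable ℂ β ∧
      ∀ z : ℂ, h₁ z = Complex.cosh (β z) ∧ h₂ z = Complex.sinh (β z) := by
  set f : ℂ → ℂ := fun z => h₁ z + h₂ z with hf
  have hmul : ∀ z : ℂ, f z * (h₁ z - h₂ z) = 1 := by
    intro z
    show (h₁ z + h₂ z) * (h₁ z - h₂ z) = 1
    linear_combination heq z
  have h0 : ∀ z : ℂ, f z ≠ 0 := by
    intro z hz
    have := hmul z
    rw [hz, zero_mul] at this
    exact zero_ne_one this
  obtain ⟨β, hβd, hβ⟩ := entire_exists_exp_eq f (hh₁.add hh₂) h0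
  refine ⟨β, hβd, fun z => ?_⟩
  have h1 : Complex.exp (β z) = h₁ z + h₂ z := hβ z
  have h2 : Complex.exp (-β z) = h₁ z - h₂ z := by
    have hinv : (h₁ z + h₂ z) * (h₁ z - h₂ z) = 1 := hmul z
    rw [Complex.exp_neg, h1]
    exact inv_eq_of_mul_eq_one_right hinv
  constructor
  · rw [Complex.cosh, Complex.exp_neg, ← Complex.exp_neg]
    rw [h1, h2]; ring
  · rw [Complex.sinh, Complex.exp_neg, ← Complex.exp_neg]
    rw [h1, h2]; ring
end

section
/- There exists a smooth function f : ℝ² → ℝ with |∇f(x)| < 1 for all x ∈ ℝ² (so that M = graph f is an entire spacelike graph in the Minkowski space ℝ₁³, with induced metric matrix g(x) = I₂ − ∇f(x)·∇f(x)ᵀ positive definite everywhere), together with a C¹ curve γ : ℝ → ℝ² with ‖γ(t)‖ → ∞ as t → ±∞, whose induced length is finite: ∫_{−∞}^{+∞} √( Σ_{i,j} g_{ij}(γ(t)) γᵢ'(t) γⱼ'(t) ) dt < +∞. In particular, an entire spacelike graph in a Minkowski space need not be complete. -/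
open Matrix MeasureTheory Filter

noncomputable section

def Fex : (Fin 2 → ℝ) → ℝ := fun x => Real.log (Real.cosh (x 0))

lemma hFf (x : Fin 2 → ℝ) :
    HasFDerivAt Fex
      (Real.tanh (x 0) • (ContinuousLinearMap.proj 0 : (Fin 2 → ℝ) →L[ℝ] ℝ)) x := by
  have h1 : HasDerivAt (fun s : ℝ => Real.log (Real.cosh s)) (Real.tanh (x 0)) (x 0) := by
    have := (Real.hasDerivAt_cosh (x 0)).log (Real.cosh_pos (x 0)).ne'
    simpa [Real.tanh_eq_sinh_div_cosh] using this
  exact h1.comp_hasFDerivAt (f := fun y : Fin 2 → ℝ => y 0) x (hasFDerivAt_apply 0 x)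

lemma pd0 (x : Fin 2 → ℝ) : pd Fex 0 x = Real.tanh (x 0) := by
  rw [pd, (hFf x).fderiv]; simp

lemma pd1 (x : Fin 2 → ℝ) : pd Fex 1 x = 0 := by
  rw [pd, (hFf x).fderiv]
  simp [Pi.single_eq_of_ne]

lemma Fsmooth : ContDiff ℝ (⊤ : ℕ∞) Fex := by
  rw [contDiff_iff_contDiffAt]
  intro x
  have hc : ContDiffAt ℝ (⊤ : ℕ∞) (fun y : Fin 2 → ℝ => Real.cosh (y 0)) x :=
    (Real.contDiff_cosh.comp (contDiff_apply ℝ ℝ 0)).contDiffAt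
  exact hc.log (Real.cosh_pos (x 0)).ne'

def Gam : ℝ → (Fin 2 → ℝ) := fun t i => if i = 0 then t else 0

lemma sech_integrable : Integrable (fun t : ℝ => (Real.cosh t)⁻¹) := by
  have hmeas : AEStronglyMeasurable (fun t : ℝ => (Real.cosh t)⁻¹) (volume : Measure ℝ) :=
    (Real.continuous_cosh.inv₀ fun t => (Real.cosh_pos t).ne').aestronglyMeasurable
  rw [← integrableOn_univ, ← Set.Iic_union_Ioi (a := (0:ℝ))]
  refine IntegrableOn.union ?_ ?_
  · refine Integrable.mono' ((integrableOn_exp_Iic 0).const_mul 2) hmeas.restrict ?_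
    refine (ae_restrict_iff' measurableSet_Iic).2 (Filter.Eventually.of_forall fun t _ => ?_)
    rw [Real.norm_eq_abs, abs_of_pos (by positivity)]
    have h2 : Real.exp (-t) / 2 ≤ Real.cosh t := by
      rw [Real.cosh_eq]; nlinarith [Real.exp_pos t]
    calc (Real.cosh t)⁻¹ ≤ (Real.exp (-t) / 2)⁻¹ := by
          apply inv_anti₀ (by positivity) h2
      _ = 2 * Real.exp t := by rw [Real.exp_neg]; field_simp
  · refine Integrable.mono' ((exp_neg_integrableOn_Ioi 0 one_pos).const_mul 2) hmeas.restrict ?_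
    refine (ae_restrict_iff' measurableSet_Ioi).2 (Filter.Eventually.of_forall fun t _ => ?_)
    rw [Real.norm_eq_abs, abs_of_pos (by positivity)]
    have h2 : Real.exp t / 2 ≤ Real.cosh t := by
      rw [Real.cosh_eq]; nlinarith [Real.exp_pos (-t)]
    calc (Real.cosh t)⁻¹ ≤ (Real.exp t / 2)⁻¹ := by
          apply inv_anti₀ (by positivity) h2
      _ = 2 * Real.exp (-1 * t) := by
          rw [show (-1 : ℝ) * t = -t by ring, Real.exp_neg]; field_simp

/-- there is an entire spacelike graph in `ℝ₁³` (given by `f` with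
`|∇f| < 1`) which is not complete: some C¹ curve going to infinity in `ℝ²` has
finite induced length. -/
theorem stmt16 :
    ∃ f : (Fin 2 → ℝ) → ℝ, ContDiff ℝ (⊤ : ℕ∞) f ∧
      (∀ x, (pd f 0 x) ^ 2 + (pd f 1 x) ^ 2 < 1) ∧
      ∃ γ : ℝ → (Fin 2 → ℝ), ContDiff ℝ 1 γ ∧
        Tendsto (fun t => ‖γ t‖) atTop atTop ∧
        Tendsto (fun t => ‖γ t‖) atBot atTop ∧
        ∫⁻ t : ℝ, ENNReal.ofReal (Real.sqrt (∑ i : Fin 2, ∑ j : Fin 2,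
          ((if i = j then (1:ℝ) else 0) - pd f i (γ t) * pd f j (γ t))
            * deriv (fun s => γ s i) t * deriv (fun s => γ s j) t)) < ⊤ := by
  refine ⟨Fex, Fsmooth, fun x => ?_, Gam, ?_, ?_, ?_, ?_⟩
  · rw [pd0, pd1, Real.tanh_eq_sinh_div_cosh, div_pow]
    have hc := Real.cosh_pos (x 0)
    have hs := Real.cosh_sq_sub_sinh_sq (x 0)
    have h3 : Real.sinh (x 0) ^ 2 / Real.cosh (x 0) ^ 2 < 1 := by
      rw [div_lt_one (by positivity)]; nlinarith
    nlinarith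
  · rw [contDiff_pi]
    intro i
    by_cases h : i = 0
    · simp only [Gam, h, if_pos rfl]; exact contDiff_id
    · simp only [Gam, if_neg h]; exact contDiff_const
  · refine tendsto_atTop_mono (fun t => ?_) tendsto_abs_atTop_atTop
    have := norm_le_pi_norm (Gam t) 0
    simpa [Gam] using this
  · refine tendsto_atTop_mono (fun t => ?_) tendsto_abs_atBot_atTop
    have := norm_le_pi_norm (Gam t) 0
    simpa [Gam] using this
  · have hd0 : ∀ t : ℝ, deriv (fun s => Gam s (0 : Fin 2)) t = 1 := by
      intro t
      have : (fun s : ℝ => Gam s (0 : Fin 2)) = id := by funext s; simp [Gam]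
      rw [this, deriv_id]
    have hd1 : ∀ t : ℝ, deriv (fun s => Gam s (1 : Fin 2)) t = 0 := by
      intro t
      have : (fun s : ℝ => Gam s (1 : Fin 2)) = fun _ => (0:ℝ) := by funext s; simp [Gam]
      rw [this, deriv_const]
    have key : ∀ t : ℝ, Real.sqrt (∑ i : Fin 2, ∑ j : Fin 2,
        ((if i = j then (1:ℝ) else 0) - pd Fex i (Gam t) * pd Fex j (Gam t))
          * deriv (fun s => Gam s i) t * deriv (fun s => Gam s j) t)
        = (Real.cosh t)⁻¹ := by
      intro t
      have hx0 : Gam t 0 = t := by simp [Gam]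
      rw [Fin.sum_univ_two]
      simp only [Fin.sum_univ_two, pd0, pd1, hd0, hd1, hx0]
      have h1 : 1 - Real.tanh t * Real.tanh t = ((Real.cosh t) ^ 2)⁻¹ := by
        rw [Real.tanh_eq_sinh_div_cosh]
        have hc := (Real.cosh_pos t).ne'
        field_simp
        nlinarith [Real.cosh_sq_sub_sinh_sq t]
      norm_num
      rw [h1, Real.sqrt_inv, Real.sqrt_sq (Real.cosh_pos t).le]
    have : (fun t : ℝ => ENNReal.ofReal (Real.sqrt (∑ i : Fin 2, ∑ j : Fin 2,
        ((if i = j then (1:ℝ) else 0) - pd Fex i (Gam t) * pd Fex j (Gam t))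
          * deriv (fun s => Gam s i) t * deriv (fun s => Gam s j) t)))
        = fun t => ENNReal.ofReal ((Real.cosh t)⁻¹) := by
      funext t; rw [key t]
    rw [this]
    exact sech_integrable.lintegral_lt_top
end
end

section
/- Let m ≥ 2, let y₀ ∈ ℝ^m be a nonzero lightlike vector for the Minkowski product on ℝ₁^m (i.e. y₀₁² + ⋯ + y₀_{m−1}² = y₀_m²), let h : ℝ² → ℝ be any smooth function, and set f = h·y₀ : ℝ² → ℝ^m. Then the induced metric matrix of the graph of f in ℝ₁^{2+m} is the identity: g_{ij}(x) = δ_{ij} for all x ∈ ℝ² and i,j ∈ {1,2}. In particular, taking h nonlinear yields an entire spacelike graph in ℝ₁^{2+m} whose orthogonal projection onto the coordinate plane ℝ² is an isometry but which is not an affine plane. -/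
open Matrix MeasureTheory Filter

noncomputable section

/-- for a nonzero lightlike `y₀ ∈ ℝ₁^m` and any smooth `h : ℝ² → ℝ`,
the graph of `f = h·y₀` has induced metric the identity; in particular, if `h` is
nonlinear this gives an entire spacelike graph whose projection to `ℝ²` is an
isometry but which is not an affine plane. -/
theorem stmt17 {m : ℕ} (hm : 2 ≤ m) (y₀ : Fin m → ℝ)
    (hly : Lightlike y₀) (hy : y₀ ≠ 0)
    (h : (Fin 2 → ℝ) → ℝ) (hh : ContDiff ℝ (⊤ : ℕ∞) h) :
    (∀ x, gMat (fun x α => h x * y₀ α) x = (1 : Matrix (Fin 2) (Fin 2) ℝ)) ∧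
    (¬ AffineLinR h → ¬ AffineLinear (fun x α => h x * y₀ α)) := by
  have hd : Differentiable ℝ h := hh.differentiable (by simp)
  have hpd : ∀ (c : ℝ) (i : Fin 2) (x : Fin 2 → ℝ),
      pd (fun y => h y * c) i x = pd h i x * c := by
    intro c i x
    unfold pd
    rw [fderiv_mul_const (hd x)]
    simp [mul_comm]
  constructor
  · intro x
    ext i j
    simp only [gMat, Matrix.of_apply, Matrix.one_apply]
    rw [show (∑ α : Fin m, (if (α : ℕ) = m - 1 then (-1:ℝ) else 1)
        * pd (fun y => h y * y₀ α) i x * pd (fun y => h y * y₀ α) j x)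
      = pd h i x * pd h j x * ∑ α : Fin m, (if (α : ℕ) = m - 1 then (-1:ℝ) else 1)
        * y₀ α * y₀ α from ?_]
    · rw [hly]; split <;> simp
    · rw [Finset.mul_sum]
      refine Finset.sum_congr rfl fun α _ => ?_
      rw [hpd, hpd]; ring
  · intro hna haf
    apply hna
    obtain ⟨L, c, hL⟩ := haf
    obtain ⟨α, hα⟩ : ∃ α, y₀ α ≠ 0 := by
      by_contra hc
      push_neg at hc
      exact hy (funext hc)
    refine ⟨(y₀ α)⁻¹ • ((LinearMap.proj α).comp L), c α / y₀ α, fun x => ?_⟩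
    have := congrFun (hL x) α
    simp only [Pi.add_apply] at this
    simp only [LinearMap.smul_apply, LinearMap.coe_comp, Function.comp_apply,
      LinearMap.proj_apply, smul_eq_mul]
    field_simp
    linarith [this]
end
end
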